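/- Let A be a finite set, k ≥ 1, and let B ∪ B' be a partition of the (k+1)-element subsets of A. Construct the directed graph G on vertex set A ⊎ [A]^{k+1} with edge set {(b, b_i) : b = {b_1,...,b_{k+1}} ∈ B, 1 ≤ i ≤ k+1}. Then for b ∈ B, the graph obtained from G by adding all edges (b_i, b_j) for i ≠ j among the elements of b contains a (k+2)-clique (a set of k+2 vertices pairwise joined by an edge in at least one direction); while for b' ∈ B', the graph obtained from G by adding all edges (b'_i, b'_j) for i ≠ j among the elements of b' contains no (k+2)-clique. -/
import Mathlib


/-- Lower bound construction: on vertex set `A ⊎ [A]^{k+1}` with edges from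
each hyperedge `b ∈ B` to its elements, completing a hyperedge of `B` creates
a `(k+2)`-clique, while completing a hyperedge of `B'` does not. -/
theorem clique_lower_bound_construction (A : Type) [Fintype A] [DecidableEq A]
    (k : ℕ) (hk : 1 ≤ k) (B B' : Finset (Finset A)) (hdisj : Disjoint B B')
    (hpart : B ∪ B' = Finset.powersetCard (k + 1) (Finset.univ : Finset A)) :
    let V := A ⊕ Finset A
    let E0 : V → V → Prop := fun u v =>
      ∃ e ∈ B, ∃ x ∈ e, u = Sum.inr e ∧ v = Sum.inl x
    let aug : Finset A → V → V → Prop := fun e u v =>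
      E0 u v ∨ ∃ x ∈ e, ∃ y ∈ e, x ≠ y ∧ u = Sum.inl x ∧ v = Sum.inl y
    let hasClique : (V → V → Prop) → Prop := fun E =>
      ∃ S : Finset V, S.card = k + 2 ∧
        ∀ u ∈ S, ∀ v ∈ S, u ≠ v → E u v ∨ E v u
    (∀ b ∈ B, hasClique (aug b)) ∧ (∀ b' ∈ B', ¬ hasClique (aug b')) := by
  intro V E0 aug hasClique
  constructor
  · intro b hb
    have hbcard : b.card = k + 1 := by
      have : b ∈ Finset.powersetCard (k+1) (Finset.univ : Finset A) := by
        rw [← hpart]; exact Finset.mem_union_left _ hb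
      exact (Finset.mem_powersetCard.mp this).2
    refine ⟨insert (Sum.inr b) (b.image Sum.inl), ?_, ?_⟩
    · rw [Finset.card_insert_of_notMem (by simp),
        Finset.card_image_of_injective _ Sum.inl_injective, hbcard]
    · intro u hu v hv huv
      simp only [Finset.mem_insert, Finset.mem_image] at hu hv
      rcases hu with rfl | ⟨x, hx, rfl⟩
      · rcases hv with rfl | ⟨y, hy, rfl⟩
        · exact absurd rfl huv
        · exact Or.inl (Or.inl ⟨b, hb, y, hy, rfl, rfl⟩)
      · rcases hv with rfl | ⟨y, hy, rfl⟩
        · exact Or.inr (Or.inl ⟨b, hb, x, hx, rfl, rfl⟩)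
        · have hxy : x ≠ y := fun h => huv (by rw [h])
          exact Or.inl (Or.inr ⟨x, hx, y, hy, hxy, rfl, rfl⟩)
  · intro b' hb' hcl
    obtain ⟨S, hScard, hS⟩ := hcl
    have hb'card : b'.card = k + 1 := by
      have : b' ∈ Finset.powersetCard (k+1) (Finset.univ : Finset A) := by
        rw [← hpart]; exact Finset.mem_union_right _ hb'
      exact (Finset.mem_powersetCard.mp this).2
    have hsum : S.toLeft.card + S.toRight.card = k + 2 := by
      rw [Finset.card_toLeft_add_card_toRight, hScard]
    have hright : S.toRight.card ≤ 1 := by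
      rw [Finset.card_le_one]
      intro e he f hf
      by_contra hef
      have h1 := hS _ (Finset.mem_toRight.mp he) _ (Finset.mem_toRight.mp hf)
        (fun h => hef (Sum.inr.inj h))
      rcases h1 with (⟨_, _, _, _, _, h⟩ | ⟨_, _, _, _, _, _, h⟩) |
        (⟨_, _, _, _, _, h⟩ | ⟨_, _, _, _, _, _, h⟩) <;> simp at h
    have hleftcard : k + 1 ≤ S.toLeft.card := by omega
    have hleft : S.toLeft ⊆ b' := by
      intro x hx
      obtain ⟨y, hy, hyx⟩ := Finset.exists_mem_ne (s := S.toLeft) (by omega) x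
      have h1 := hS _ (Finset.mem_toLeft.mp hx) _ (Finset.mem_toLeft.mp hy)
        (fun h => hyx (Sum.inl.inj h).symm)
      rcases h1 with (⟨_, _, _, _, h, _⟩ | ⟨a, ha, c, hc, _, hu, _⟩) |
        (⟨_, _, _, _, h, _⟩ | ⟨a, ha, c, hc, _, _, hv⟩)
      · simp at h
      · obtain rfl : x = a := Sum.inl.inj hu
        exact ha
      · simp at h
      · obtain rfl : x = c := Sum.inl.inj hv
        exact hc
    have hle : S.toLeft.card ≤ k + 1 := hb'card ▸ Finset.card_le_card hleft
    have hlefteq : S.toLeft = b' :=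
      Finset.eq_of_subset_of_card_le hleft (by omega)
    have hrcard : S.toRight.card = 1 := by omega
    obtain ⟨e, hee⟩ := Finset.card_eq_one.mp hrcard
    have heS : Sum.inr e ∈ S := Finset.mem_toRight.mp (by rw [hee]; simp)
    have heB : e ∈ B ∧ b' ⊆ e := by
      constructor
      · obtain ⟨x, hx⟩ : b'.Nonempty := Finset.card_pos.mp (by omega)
        have hxS : Sum.inl x ∈ S := Finset.mem_toLeft.mp (by rw [hlefteq]; exact hx)
        have h1 := hS _ heS _ hxS (by simp)
        rcases h1 with (⟨f, hf, z, hz, hu, _⟩ | ⟨a, ha, c, hc, _, hu, _⟩) |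
          (⟨f, hf, z, hz, _, hv⟩ | ⟨a, ha, c, hc, _, _, hv⟩)
        · obtain rfl : e = f := Sum.inr.inj hu
          exact hf
        · simp at hu
        · simp at hv
        · simp at hv
      · intro x hx
        have hxS : Sum.inl x ∈ S := Finset.mem_toLeft.mp (by rw [hlefteq]; exact hx)
        have h1 := hS _ heS _ hxS (by simp)
        rcases h1 with (⟨f, hf, z, hz, hu, hv⟩ | ⟨a, ha, c, hc, _, hu, _⟩) |
          (⟨f, hf, z, hz, hu, hv⟩ | ⟨a, ha, c, hc, _, _, hv⟩)
        · obtain rfl : e = f := Sum.inr.inj hu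
          obtain rfl : x = z := Sum.inl.inj hv
          exact hz
        · simp at hu
        · simp at hu
        · simp at hv
    have hecard : e.card = k + 1 := by
      have : e ∈ Finset.powersetCard (k+1) (Finset.univ : Finset A) := by
        rw [← hpart]; exact Finset.mem_union_left _ heB.1
      exact (Finset.mem_powersetCard.mp this).2
    have : e = b' := (Finset.eq_of_subset_of_card_le heB.2 (by omega)).symm
    exact Finset.disjoint_left.mp hdisj (this ▸ heB.1) hb'
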